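/- (Per-column stability of Generalized FTPL) Suppose each column of Γ contains at most κ distinct values and any two distinct values appearing in the same column differ by at least δ > 0. Let ε ≥ 0, let D be a (ρ, (1+2ε)/δ)-dispersed probability distribution on ℝ, let α = (α_1,…,α_N) have independent coordinates each with law D, and suppose that for every α the sequence x_1(α),…,x_{T+1}(α) is an ε-approximate Generalized-FTPL trajectory for α, with each map α ↦ x_t(α) measurable. Then for every t ∈ {1,…,T} and every j ∈ {1,…,N}: P[Γ_{x_{t+1}(α),j} ≠ Γ_{x_t(α),j}] ≤ 2κρ. -/

import Mathlib

open Finset MeasureTheory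
open scoped ENNReal

/-- **Per-column stability of Generalized FTPL.**
If each column of `Γ` has at most `κ` distinct values, distinct values within a column
differ by at least `δ > 0`, the coordinates of `α` are i.i.d. with a
`(ρ, (1+2ε)/δ)`-dispersed law `D`, and `xtraj α` is an ε-approximate Generalized-FTPL
trajectory for every `α`, then for every round `t ∈ {1,…,T}` and column `j`:
`P[Γ_{x_{t+1}(α), j} ≠ Γ_{x_t(α), j}] ≤ 2κρ`. -/
theorem per_column_stability
    {X Y : Type*} [Fintype X] [Nonempty X]
    (f : X → Y → ℝ) (hf : ∀ x y, f x y ∈ Set.Icc (0:ℝ) 1)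
    (T : ℕ) (hT : 1 ≤ T) (y : ℕ → Y)
    (N : ℕ) (hN : 1 ≤ N)
    (Γ : X → Fin N → ℝ) (hΓ : ∀ x j, Γ x j ∈ Set.Icc (0:ℝ) 1)
    (κ : ℕ) (δ : ℝ) (hδ : 0 < δ)
    (hcol : ∀ j : Fin N, (Finset.univ.image fun x => Γ x j).card ≤ κ)
    (hgap : ∀ (j : Fin N) (x x' : X), Γ x j ≠ Γ x' j → δ ≤ |Γ x j - Γ x' j|)
    (ε ρ : ℝ) (hε : 0 ≤ ε)
    (D : Measure ℝ) [IsProbabilityMeasure D]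
    (hdisp : ∀ a : ℝ, D (Set.Icc a (a + (1 + 2*ε)/δ)) ≤ ENNReal.ofReal ρ)
    (xtraj : (Fin N → ℝ) → ℕ → X)
    (hmeas : ∀ (t : ℕ) (x₀ : X), MeasurableSet {α : Fin N → ℝ | xtraj α t = x₀})
    (htraj : ∀ (α : Fin N → ℝ) (t : ℕ), 1 ≤ t → t ≤ T + 1 → ∀ x' : X,
      (∑ τ ∈ Finset.Icc 1 (t-1), f (xtraj α t) (y τ)) + (∑ j, α j * Γ (xtraj α t) j) ≥
      (∑ τ ∈ Finset.Icc 1 (t-1), f x' (y τ)) + (∑ j, α j * Γ x' j) - ε)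
    (t : ℕ) (ht1 : 1 ≤ t) (ht2 : t ≤ T) (j : Fin N) :
    (Measure.pi fun _ : Fin N => D)
      {α : Fin N → ℝ | Γ (xtraj α (t+1)) j ≠ Γ (xtraj α t) j} ≤
      ENNReal.ofReal (2 * κ * ρ) := by
  classical
  set L : ℝ := (1 + 2*ε)/δ with hLdef
  have hLpos : 0 < L := div_pos (by linarith) hδ
  -- nonnegativity of ρ
  have hρ0 : 0 ≤ ρ := by
    by_contra hneg
    push_neg at hneg
    have hall : ∀ a : ℝ, D (Set.Icc a (a + L)) = 0 := by
      intro a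
      have h := hdisp a
      rw [ENNReal.ofReal_eq_zero.mpr hneg.le] at h
      exact le_antisymm h zero_le
    have hcover : (Set.univ : Set ℝ) ⊆ ⋃ n : ℤ, Set.Icc ((n : ℝ) * L) ((n : ℝ) * L + L) := by
      intro x _
      refine Set.mem_iUnion.mpr ⟨⌊x / L⌋, ?_, ?_⟩
      · calc ((⌊x / L⌋ : ℝ)) * L ≤ (x / L) * L :=
            mul_le_mul_of_nonneg_right (Int.floor_le _) hLpos.le
          _ = x := div_mul_cancel₀ x hLpos.ne'
      · have h1 : x / L < (⌊x / L⌋ : ℝ) + 1 := Int.lt_floor_add_one _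
        have h2 : x < ((⌊x / L⌋ : ℝ) + 1) * L := (div_lt_iff₀ hLpos).mp h1
        nlinarith
    have : (1 : ℝ≥0∞) ≤ 0 := by
      calc (1 : ℝ≥0∞) = D Set.univ := measure_univ.symm
        _ ≤ D (⋃ n : ℤ, Set.Icc ((n : ℝ) * L) ((n : ℝ) * L + L)) := measure_mono hcover
        _ ≤ ∑' n : ℤ, D (Set.Icc ((n : ℝ) * L) ((n : ℝ) * L + L)) := measure_iUnion_le _
        _ = 0 := by simp [hall]
    simp at this
  -- key deterministic cross-monotonicity
  obtain ⟨u, rfl⟩ : ∃ u, t = u + 1 := ⟨t - 1, by omega⟩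
  have key : ∀ (α : Fin N → ℝ) (a' : ℝ), α j + L < a' → ∀ s s' : ℕ,
      (s = u + 1 ∨ s = u + 2) → (s' = u + 1 ∨ s' = u + 2) →
      Γ (xtraj α s) j ≤ Γ (xtraj (Function.update α j a') s') j := by
    intro α a' ha s s' hs hs'
    set β := Function.update α j a' with hβ
    set x := xtraj α s with hx
    set x' := xtraj β s' with hx'
    have hsum : ∀ z : X, (∑ k, β k * Γ z k) = (∑ k, α k * Γ z k) + (a' - α j) * Γ z j := by
      intro z
      have h1 : ∀ k, β k * Γ z k
          = α k * Γ z k + (if k = j then (a' - α j) * Γ z j else 0) := by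
        intro k
        by_cases h : k = j
        · subst h; simp [hβ]; ring
        · simp [hβ, Function.update_of_ne h, h]
      rw [Finset.sum_congr rfl fun k _ => h1 k, Finset.sum_add_distrib]
      simp
    have hcδ : 1 + 2*ε < (a' - α j) * δ := by
      have hLc : L < a' - α j := by linarith
      rw [hLdef] at hLc
      exact (div_lt_iff₀ hδ).mp hLc
    have hc0 : 0 < a' - α j := by linarith
    have h1 := htraj α s (by omega) (by omega) x'
    have h2 := htraj β s' (by omega) (by omega) x
    rw [← hx] at h1
    rw [← hx'] at h2
    rw [hsum x, hsum x'] at h2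
    -- bound on the change of the f-sums
    have hfsum : (∑ τ ∈ Finset.Icc 1 (s'-1), f x (y τ)) - (∑ τ ∈ Finset.Icc 1 (s-1), f x (y τ))
        - ((∑ τ ∈ Finset.Icc 1 (s'-1), f x' (y τ)) - (∑ τ ∈ Finset.Icc 1 (s-1), f x' (y τ)))
        ≥ -1 := by
      have hfx := hf x (y (u+1))
      have hfx' := hf x' (y (u+1))
      simp only [Set.mem_Icc] at hfx hfx'
      have hexp : ∀ z : X, (∑ τ ∈ Finset.Icc 1 (u+1), f z (y τ))
          = (∑ τ ∈ Finset.Icc 1 u, f z (y τ)) + f z (y (u+1)) :=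
        fun z => Finset.sum_Icc_succ_top (by omega) _
      rcases hs with rfl | rfl <;> rcases hs' with rfl | rfl <;>
        simp only [Nat.add_sub_cancel, show u + 2 - 1 = u + 1 from rfl] <;>
        [skip; rw [hexp x, hexp x']; rw [hexp x, hexp x']; skip] <;> linarith
    have main : (a' - α j) * (Γ x j - Γ x' j) ≤ 1 + 2*ε := by
      have hring : (a' - α j) * (Γ x j - Γ x' j)
          = (a' - α j) * Γ x j - (a' - α j) * Γ x' j := by ring
      rw [hring]
      linarith [h1, h2, hfsum]
    by_contra hlt
    push_neg at hlt
    have hne : Γ x j ≠ Γ x' j := ne_of_gt hlt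
    have hgapx := hgap j x x' hne
    rw [abs_of_pos (by linarith)] at hgapx
    have : (a' - α j) * δ ≤ (a' - α j) * (Γ x j - Γ x' j) :=
      mul_le_mul_of_nonneg_left hgapx hc0.le
    linarith
  set t := u + 1 with htdef
  -- one-dimensional slice bound
  have slice : ∀ x₀ : Fin N → ℝ,
      D {a : ℝ | Γ (xtraj (Function.update x₀ j a) (t+1)) j
          ≠ Γ (xtraj (Function.update x₀ j a) t) j} ≤ ENNReal.ofReal (2 * κ * ρ) := by
    intro x₀
    set g : ℝ → ℝ := fun a => Γ (xtraj (Function.update x₀ j a) t) j with hgdef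
    set h : ℝ → ℝ := fun a => Γ (xtraj (Function.update x₀ j a) (t+1)) j with hhdef
    have upd : ∀ a a' : ℝ, Function.update (Function.update x₀ j a) j a'
        = Function.update x₀ j a' := fun a a' => Function.update_idem a a' x₀
    have cross1 : ∀ a a' : ℝ, a + L < a' → g a ≤ h a' := by
      intro a a' haa
      have := key (Function.update x₀ j a) a'
        (by rw [Function.update_self]; exact haa) t (t+1) (Or.inl rfl) (Or.inr rfl)
      rwa [upd] at this
    have cross2 : ∀ a a' : ℝ, a + L < a' → h a ≤ g a' := by
      intro a a' haa
      have := key (Function.update x₀ j a) a'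
        (by rw [Function.update_self]; exact haa) (t+1) t (Or.inr rfl) (Or.inl rfl)
      rwa [upd] at this
    -- each "crossing" set fits in an interval of length L
    have interval : ∀ (p q : ℝ → ℝ), (∀ a a' : ℝ, a + L < a' → q a ≤ p a') → ∀ c : ℝ,
        D {a : ℝ | c ≤ q a ∧ p a < c} ≤ ENNReal.ofReal ρ := by
      intro p q hpq c
      set U : Set ℝ := {a : ℝ | c ≤ q a ∧ p a < c} with hU
      rcases U.eq_empty_or_nonempty with he | hne
      · simp [he]
      · obtain ⟨a₀, ha₀⟩ := hne
        have hdiam : ∀ a ∈ U, ∀ a' ∈ U, a' ≤ a + L := by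
          intro a ha a' ha'
          by_contra hgt
          push_neg at hgt
          exact absurd (hpq a a' hgt) (not_le.mpr (lt_of_lt_of_le ha'.2 ha.1))
        have hbdd : BddBelow U := ⟨a₀ - L, fun a ha => by
          have := hdiam a ha a₀ ha₀; linarith⟩
        have hsub : U ⊆ Set.Icc (sInf U) (sInf U + L) := by
          intro a ha
          refine ⟨csInf_le hbdd ha, ?_⟩
          have hlb : a - L ≤ sInf U :=
            le_csInf ⟨a₀, ha₀⟩ fun b hb => by have := hdiam b hb a ha; linarith
          linarith
        calc D U ≤ D (Set.Icc (sInf U) (sInf U + L)) := measure_mono hsub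
          _ ≤ ENNReal.ofReal ρ := hdisp _
    set V : Finset ℝ := Finset.univ.image fun x : X => Γ x j with hV
    have hcover : {a : ℝ | h a ≠ g a}
        ⊆ ⋃ c ∈ V, ({a : ℝ | c ≤ g a ∧ h a < c} ∪ {a : ℝ | c ≤ h a ∧ g a < c}) := by
      intro a ha
      simp only [Set.mem_setOf_eq] at ha
      rcases lt_or_gt_of_ne ha with hlt | hgt
      · exact Set.mem_iUnion₂.mpr ⟨g a, Finset.mem_image_of_mem _ (Finset.mem_univ _),
          Or.inl ⟨le_refl _, hlt⟩⟩
      · exact Set.mem_iUnion₂.mpr ⟨h a, Finset.mem_image_of_mem _ (Finset.mem_univ _),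
          Or.inr ⟨le_refl _, hgt⟩⟩
    have hVcard : (V.card : ℝ≥0∞) ≤ (κ : ℝ≥0∞) := by exact_mod_cast hcol j
    calc D {a : ℝ | h a ≠ g a}
        ≤ D (⋃ c ∈ V, ({a : ℝ | c ≤ g a ∧ h a < c} ∪ {a : ℝ | c ≤ h a ∧ g a < c})) :=
          measure_mono hcover
      _ ≤ ∑ c ∈ V, D ({a : ℝ | c ≤ g a ∧ h a < c} ∪ {a : ℝ | c ≤ h a ∧ g a < c}) :=
          measure_biUnion_finset_le V _
      _ ≤ ∑ _c ∈ V, (ENNReal.ofReal ρ + ENNReal.ofReal ρ) := by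
          refine Finset.sum_le_sum fun c _ => ?_
          exact le_trans (measure_union_le _ _)
            (add_le_add (interval h g cross1 c) (interval g h cross2 c))
      _ = (V.card : ℝ≥0∞) * (ENNReal.ofReal ρ + ENNReal.ofReal ρ) := by
          rw [Finset.sum_const, nsmul_eq_mul]
      _ ≤ (κ : ℝ≥0∞) * (ENNReal.ofReal ρ + ENNReal.ofReal ρ) :=
          mul_le_mul_left hVcard _
      _ = ENNReal.ofReal (2 * κ * ρ) := by
          rw [← ENNReal.ofReal_add hρ0 hρ0, ← ENNReal.ofReal_natCast κ,
            ← ENNReal.ofReal_mul (by positivity)]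
          congr 1
          ring
  -- Fubini step
  set B : Set (Fin N → ℝ) := {α : Fin N → ℝ | Γ (xtraj α (t+1)) j ≠ Γ (xtraj α t) j} with hB
  have hBmeas : MeasurableSet B := by
    have hBeq : B = ⋃ x₁ : X, ⋃ x₂ : X, ⋃ _ : Γ x₁ j ≠ Γ x₂ j,
        ({α : Fin N → ℝ | xtraj α (t+1) = x₁} ∩ {α : Fin N → ℝ | xtraj α t = x₂}) := by
      ext α
      simp only [hB, Set.mem_setOf_eq, Set.mem_iUnion, Set.mem_inter_iff]
      constructor
      · intro hne; exact ⟨_, _, hne, rfl, rfl⟩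
      · rintro ⟨x₁, x₂, hne, h1, h2⟩; rw [h1, h2]; exact hne
    rw [hBeq]
    exact MeasurableSet.iUnion fun _ => MeasurableSet.iUnion fun _ =>
      MeasurableSet.iUnion fun _ => (hmeas _ _).inter (hmeas _ _)
  have hind : Measurable (B.indicator (1 : (Fin N → ℝ) → ℝ≥0∞)) :=
    measurable_one.indicator hBmeas
  calc (Measure.pi fun _ : Fin N => D) B
      = ∫⁻ α, B.indicator 1 α ∂(Measure.pi fun _ : Fin N => D) :=
        (lintegral_indicator_one hBmeas).symm
    _ = (∫⋯∫⁻_Finset.univ, B.indicator 1 ∂(fun _ : Fin N => D)) (fun _ => 0) :=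
        lintegral_eq_lmarginal_univ _
    _ = (∫⋯∫⁻_(Finset.univ.erase j),
          (fun x => ∫⁻ a, B.indicator 1 (Function.update x j a) ∂D)
          ∂(fun _ : Fin N => D)) (fun _ => 0) := by
        rw [lmarginal_erase' _ hind (Finset.mem_univ j)]
    _ ≤ (∫⋯∫⁻_(Finset.univ.erase j),
          (fun _ => ENNReal.ofReal (2 * κ * ρ)) ∂(fun _ : Fin N => D)) (fun _ => 0) := by
        refine lmarginal_mono (fun x => ?_) _
        have heq : (fun a : ℝ => B.indicator 1 (Function.update x j a))
            = Set.indicator ((Function.update x j) ⁻¹' B) (1 : ℝ → ℝ≥0∞) := by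
          funext a
          by_cases hmem : Function.update x j a ∈ B <;>
            simp [Set.indicator, hmem, Set.mem_preimage]
        simp only []
        rw [heq, lintegral_indicator_one (hBmeas.preimage (measurable_update x))]
        exact slice x
    _ = ENNReal.ofReal (2 * κ * ρ) := by
        simp [lmarginal, lintegral_const]
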